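/- If β, κ, δ, δₐ > 0 and δ < κ+β, then the derivative of a₁(s) = (1-s)(δ-(κ+β)s)/(δ-δₐ-(κ+β)s) satisfies a₁'(δ/(κ+β)) > 0 and -1 < a₁'(1) < 0, where a₁'(1) = (κ+β-δ)/(δ-δₐ-(κ+β)). -/

import Mathlib

/-- Endpoint slopes of the vertical nullcline a₁ when δ < κ+β. -/
theorem stmt_12
    (β κ δ δa : ℝ)
    (hβ : 0 < β) (hκ : 0 < κ) (hδ : 0 < δ) (hδa : 0 < δa)
    (h : δ < κ + β)
    (a₁ : ℝ → ℝ)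
    (ha₁ : ∀ s, a₁ s = (1 - s) * (δ - (κ + β) * s) / (δ - δa - (κ + β) * s)) :
    0 < deriv a₁ (δ / (κ + β)) ∧
    deriv a₁ 1 = (κ + β - δ) / (δ - δa - (κ + β)) ∧
    -1 < deriv a₁ 1 ∧ deriv a₁ 1 < 0 := by
  have hA : a₁ = fun s => (1 - s) * (δ - (κ + β) * s) / (δ - δa - (κ + β) * s) :=
    funext ha₁
  have hc : (0:ℝ) < κ + β := by linarith
  set c := κ + β with hcdef
  have key : ∀ x : ℝ, δ - δa - c * x ≠ 0 →
      deriv a₁ x = ((-(δ - c*x) + (1-x)*(-c)) * (δ - δa - c*x)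
        - (1-x)*(δ - c*x)*(-c)) / (δ - δa - c*x)^2 := by
    intro x hx
    have h1 : HasDerivAt (fun s : ℝ => (1 - s) * (δ - c * s))
        (-(δ - c*x) + (1-x)*(-c)) x := by
      have : HasDerivAt (fun s : ℝ => (1 - s) * (δ - c * s)) _ x :=
        ((hasDerivAt_const x (1:ℝ)).sub (hasDerivAt_id x)).mul
        ((hasDerivAt_const x δ).sub ((hasDerivAt_const x c).mul (hasDerivAt_id x)))
      convert this using 1
      simp [id]
    have h2 : HasDerivAt (fun s : ℝ => δ - δa - c * s) (-c) x := by
      have : HasDerivAt (fun s : ℝ => δ - δa - c * s) _ x := (hasDerivAt_const x (δ - δa)).sub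
        ((hasDerivAt_const x c).mul (hasDerivAt_id x))
      convert this using 1
      ring
    have h3 := (h1.div h2 hx)
    rw [hA]
    exact h3.deriv
  have hx1 : δ - δa - c * (δ / c) ≠ 0 := by
    rw [mul_div_cancel₀ _ (ne_of_gt hc)]
    intro hcontra
    have : δa = 0 := by linarith
    linarith
  have hx2 : δ - δa - c * 1 ≠ 0 := by
    intro hcontra
    nlinarith
  have d1 := key _ hx1
  have d2 := key 1 hx2
  have e1 : δ - δa - c * (δ / c) = -δa := by
    rw [mul_div_cancel₀ _ (ne_of_gt hc)]; ring
  have hd1 : deriv a₁ (δ / c) = (c - δ) / δa := by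
    rw [d1, e1]
    rw [mul_div_cancel₀ _ (ne_of_gt hc)]
    field_simp
    ring
  have hd2 : deriv a₁ 1 = (c - δ) / (δ - δa - c) := by
    rw [d2]
    have hne : δ - δa - c ≠ 0 := by intro hcontra; nlinarith
    field_simp
    ring
  refine ⟨?_, ?_, ?_, ?_⟩
  · rw [hd1]; exact div_pos (by linarith) hδa
  · rw [hd2]
  · rw [hd2, lt_div_iff_of_neg (by nlinarith : δ - δa - c < 0)]
    nlinarith
  · rw [hd2]
    apply div_neg_of_pos_of_neg <;> nlinarith
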